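/- Let a : ℤ → ℝ be a finitely supported mask whose symbol factors as a(z) = (1 + z)·q(z), where the finitely supported sequence q : ℤ → ℝ has non-negative entries, satisfies q(1) = 1, and satisfies max{S_e, S_o} < 1 with S_e = ∑_j q_{2j} and S_o = ∑_j q_{2j+1}. Then the subdivision scheme S_a is uniformly convergent, and μ = max{S_e, S_o} is a contractivity factor with contractivity number 1, i.e. sup_i |Δ(S_a f)_i| ≤ μ · sup_i |Δf_i| for every bounded f. -/

import Mathlib

open Filter Topology

/-- The subdivision operator with mask `a`: `(S_a f)_i = ∑_{j ∈ ℤ} a_{i-2j} f_j`. -/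
noncomputable def subdiv (a f : ℤ → ℝ) : ℤ → ℝ := fun i => ∑ᶠ j : ℤ, a (i - 2 * j) * f j

/-- A sequence `f : ℤ → ℝ` is bounded. -/
def Bdd (f : ℤ → ℝ) : Prop := ∃ C : ℝ, ∀ i : ℤ, |f i| ≤ C

/-- The forward difference operator `(Δf)_i = f_{i+1} - f_i`. -/
def Δseq (f : ℤ → ℝ) : ℤ → ℝ := fun i => f (i + 1) - f i

/-- Coefficients of the iterated symbol `q^{[L]}(z) = q(z) q(z²) ⋯ q(z^{2^{L-1}})`,
defined via `q^{[0]}(z) = 1` and `q^{[L+1]}(z) = q(z) · q^{[L]}(z²)`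
(so the coefficient recursion is `q^{[L+1]}_i = ∑_j q_{i-2j} q^{[L]}_j`). -/
noncomputable def iterCoeff (q : ℤ → ℝ) : ℕ → ℤ → ℝ
  | 0 => fun i => if i = 0 then 1 else 0
  | L + 1 => fun i => ∑ᶠ j : ℤ, q (i - 2 * j) * iterCoeff q L j

/-- The refinements `f^k = S_a^k f⁰` converge uniformly to the continuous function `fstar`:
for every `N > 0`, `sup_{|i| ≤ N·2^k} |f^k_i - fstar(2^{-k} i)| → 0` as `k → ∞`. -/
def ConvergesTo (a f0 : ℤ → ℝ) (fstar : ℝ → ℝ) : Prop :=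
  Continuous fstar ∧ ∀ N : ℝ, 0 < N →
    Filter.Tendsto (fun k : ℕ =>
      ⨆ i : {i : ℤ // |(i : ℝ)| ≤ N * 2 ^ k},
        |(subdiv a)^[k] f0 i.1 - fstar ((i.1 : ℝ) / 2 ^ k)|) Filter.atTop (nhds 0)

/-- The subdivision scheme `S_a` is uniformly convergent: every bounded initial sequence
has a continuous limit function, and some bounded initial sequence has a nonzero limit. -/
def UniformlyConvergent (a : ℤ → ℝ) : Prop :=
  (∀ f0 : ℤ → ℝ, Bdd f0 → ∃ fstar : ℝ → ℝ, ConvergesTo a f0 fstar) ∧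
  (∃ f0 fstar, Bdd f0 ∧ ConvergesTo a f0 fstar ∧ fstar ≠ fun _ => 0)


private lemma supp2 {q : ℤ → ℝ} (hq : (Function.support q).Finite) (c : ℤ) :
    (Function.support (fun j : ℤ => q (c - 2*j))).Finite := by
  have h : Function.support (fun j : ℤ => q (c - 2*j)) ⊆
      (fun j : ℤ => c - 2*j) ⁻¹' Function.support q := fun j hj => hj
  exact (Set.Finite.preimage (fun x _ y _ hxy => by omega) hq).subset h

private lemma supp2m {q : ℤ → ℝ} (hq : (Function.support q).Finite) (c : ℤ) (f : ℤ → ℝ) :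
    (Function.support (fun j : ℤ => q (c - 2*j) * f j)).Finite :=
  (supp2 hq c).subset (fun j hj => left_ne_zero_of_mul hj)

private lemma sum_shift_even (q : ℤ → ℝ) {m : ℤ} (hm : Even m) :
    ∑ᶠ j : ℤ, q (m - 2*j) = ∑ᶠ j : ℤ, q (2*j) := by
  obtain ⟨c, rfl⟩ := hm
  calc ∑ᶠ j : ℤ, q (c + c - 2*j) = ∑ᶠ j : ℤ, (fun j : ℤ => q (2*j)) (Equiv.subLeft c j) := by
        refine finsum_congr fun j => ?_
        simp only [Equiv.subLeft_apply]
        congr 1; ring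
    _ = _ := finsum_comp_equiv (Equiv.subLeft c) (f := fun j : ℤ => q (2*j))

private lemma sum_shift_odd (q : ℤ → ℝ) {m : ℤ} (hm : Odd m) :
    ∑ᶠ j : ℤ, q (m - 2*j) = ∑ᶠ j : ℤ, q (2*j+1) := by
  obtain ⟨c, rfl⟩ := hm
  calc ∑ᶠ j : ℤ, q (2*c + 1 - 2*j) = ∑ᶠ j : ℤ, (fun j : ℤ => q (2*j+1)) (Equiv.subLeft c j) := by
        refine finsum_congr fun j => ?_
        simp only [Equiv.subLeft_apply]
        congr 1; ring
    _ = _ := finsum_comp_equiv (Equiv.subLeft c) (f := fun j : ℤ => q (2*j+1))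

private lemma parity_sum (q : ℤ → ℝ) (hq : (Function.support q).Finite) :
    ∑ᶠ i : ℤ, q i = (∑ᶠ j : ℤ, q (2*j)) + ∑ᶠ j : ℤ, q (2*j+1) := by
  have hinj1 : Function.Injective (fun j : ℤ => 2*j) := fun x y h => by have h1 : 2*x = 2*y := h; omega
  have hinj2 : Function.Injective (fun j : ℤ => 2*j+1) := fun x y h => by have h1 : 2*x+1 = 2*y+1 := h; omega
  have hdisj : Disjoint (Set.range (fun j : ℤ => 2*j)) (Set.range (fun j : ℤ => 2*j+1)) := by
    rw [Set.disjoint_left]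
    rintro x ⟨m, rfl⟩ ⟨n, hn⟩
    have h1 : 2*n+1 = 2*m := hn
    omega
  have huniv : Set.range (fun j : ℤ => 2*j) ∪ Set.range (fun j : ℤ => 2*j+1) = Set.univ := by
    ext x; simp only [Set.mem_union, Set.mem_range, Set.mem_univ, iff_true]
    rcases Int.even_or_odd x with ⟨c, hc⟩ | ⟨c, hc⟩
    · exact Or.inl ⟨c, by omega⟩
    · exact Or.inr ⟨c, by omega⟩
  calc ∑ᶠ i : ℤ, q i = ∑ᶠ i ∈ Set.range (fun j : ℤ => 2*j) ∪ Set.range (fun j : ℤ => 2*j+1), q i := by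
        rw [huniv, finsum_mem_univ]
    _ = (∑ᶠ i ∈ Set.range (fun j : ℤ => 2*j), q i) + ∑ᶠ i ∈ Set.range (fun j : ℤ => 2*j+1), q i :=
        finsum_mem_union' hdisj (hq.subset Set.inter_subset_right)
          (hq.subset Set.inter_subset_right)
    _ = _ := by rw [finsum_mem_range hinj1, finsum_mem_range hinj2]

private lemma abs_finsum_le (g h : ℤ → ℝ) (hh : (Function.support h).Finite)
    (hle : ∀ j, |g j| ≤ h j) : |∑ᶠ j, g j| ≤ ∑ᶠ j, h j := by
  have hsub : Function.support g ⊆ (hh.toFinset : Set ℤ) := by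
    intro j hj
    simp only [Set.Finite.coe_toFinset, Function.mem_support]
    intro h0
    have h1 := hle j
    rw [h0] at h1
    exact hj (abs_nonpos_iff.mp h1)
  rw [finsum_eq_sum_of_support_subset g hsub,
    finsum_eq_sum_of_support_subset h (fun x hx => hh.mem_toFinset.mpr hx)]
  exact (Finset.abs_sum_le_sum_abs _ _).trans (Finset.sum_le_sum fun j _ => hle j)

section main
variable {a q : ℤ → ℝ} (ha : (Function.support a).Finite) (hq : (Function.support q).Finite)
  (hfac : ∀ i : ℤ, a i = q i + q (i - 1))
  (hnn : ∀ i : ℤ, 0 ≤ q i) (hq1 : ∑ᶠ i : ℤ, q i = 1)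

include hq hfac hq1 in
private lemma mask_sum : ∀ i : ℤ, ∑ᶠ j : ℤ, a (i - 2*j) = 1 := by
  intro i
  have h1 : ∀ j : ℤ, a (i - 2*j) = q (i - 2*j) + q ((i-1) - 2*j) := by
    intro j; rw [hfac]; congr 2; ring
  rw [finsum_congr h1, finsum_add_distrib (supp2 hq i) (supp2 hq (i-1))]
  have hps := (parity_sum q hq).symm.trans hq1
  rcases Int.even_or_odd i with he | ho
  · rw [sum_shift_even q he, sum_shift_odd q (by rcases he with ⟨c, rfl⟩; exact ⟨c-1, by ring⟩)]
    linarith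
  · rw [sum_shift_odd q ho, sum_shift_even q (by rcases ho with ⟨c, rfl⟩; exact ⟨c, by ring⟩)]
    linarith

include hq hfac in
private lemma diff_subdiv (f : ℤ → ℝ) (i : ℤ) :
    Δseq (subdiv a f) i = ∑ᶠ j : ℤ, q (i + 1 - 2*j) * (f j - f (j-1)) := by
  have e1 : ∀ j : ℤ, a (i + 1 - 2*j) * f j
      = q (i + 1 - 2*j) * f j + q (i - 2*j) * f j := by
    intro j; rw [hfac]; ring_nf
  have e2 : ∀ j : ℤ, a (i - 2*j) * f j
      = q (i - 2*j) * f j + q (i - 1 - 2*j) * f j := by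
    intro j; rw [hfac]; ring_nf
  have hΔ : Δseq (subdiv a f) i
      = (∑ᶠ j : ℤ, q (i + 1 - 2*j) * f j) - ∑ᶠ j : ℤ, q (i - 1 - 2*j) * f j := by
    show (∑ᶠ j : ℤ, a (i + 1 - 2*j) * f j) - (∑ᶠ j : ℤ, a (i - 2*j) * f j) = _
    rw [finsum_congr e1, finsum_congr e2,
      finsum_add_distrib (supp2m hq _ f) (supp2m hq _ f),
      finsum_add_distrib (supp2m hq _ f) (supp2m hq _ f)]
    ring
  have hshift : ∑ᶠ j : ℤ, q (i - 1 - 2*j) * f j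
      = ∑ᶠ j : ℤ, q (i + 1 - 2*j) * f (j-1) := by
    have : ∀ j : ℤ, q (i - 1 - 2*j) * f j
        = (fun j : ℤ => q (i + 1 - 2*j) * f (j-1)) (Equiv.addRight (1:ℤ) j) := by
      intro j
      simp only [Equiv.coe_addRight, add_sub_cancel_right]
      congr 2; ring
    rw [finsum_congr this, finsum_comp_equiv (Equiv.addRight (1:ℤ))
      (f := fun j : ℤ => q (i + 1 - 2*j) * f (j-1))]
  rw [hΔ, hshift, ← finsum_sub_distrib (supp2m hq _ f) (supp2m hq _ (fun j => f (j-1)))]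
  exact finsum_congr fun j => by ring

include hq hfac hnn in
private lemma contract (f : ℤ → ℝ) (D : ℝ)
    (hD : ∀ j : ℤ, |f (j+1) - f j| ≤ D) (i : ℤ) :
    |Δseq (subdiv a f) i| ≤ max (∑ᶠ j : ℤ, q (2*j)) (∑ᶠ j : ℤ, q (2*j+1)) * D := by
  have hD0 : 0 ≤ D := le_trans (abs_nonneg _) (hD 0)
  rw [diff_subdiv hq hfac f i]
  have step1 : |∑ᶠ j : ℤ, q (i + 1 - 2*j) * (f j - f (j-1))|
      ≤ ∑ᶠ j : ℤ, q (i + 1 - 2*j) * D := by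
    refine abs_finsum_le _ _ ((supp2 hq (i+1)).subset fun j hj => left_ne_zero_of_mul hj) ?_
    intro j
    rw [abs_mul, abs_of_nonneg (hnn _)]
    refine mul_le_mul_of_nonneg_left ?_ (hnn _)
    have := hD (j-1)
    simpa using this
  refine step1.trans ?_
  rw [← finsum_mul _ _]
  refine mul_le_mul_of_nonneg_right ?_ hD0
  rcases Int.even_or_odd (i+1) with he | ho
  · rw [sum_shift_even q he]; exact le_max_left _ _
  · rw [sum_shift_odd q ho]; exact le_max_right _ _

private lemma steps (f : ℤ → ℝ) (D : ℝ) (hD : ∀ j : ℤ, |f (j+1) - f j| ≤ D) (i j : ℤ) :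
    |f j - f i| ≤ ((j - i).natAbs : ℝ) * D := by
  have hD0 : 0 ≤ D := le_trans (abs_nonneg _) (hD 0)
  have hn : ∀ n : ℕ, ∀ i : ℤ, |f (i + n) - f i| ≤ (n : ℝ) * D := by
    intro n
    induction n with
    | zero => intro i; simp
    | succ n ih =>
      intro i
      have h1 : f (i + (n+1:ℕ)) - f i = (f ((i + n) + 1) - f (i + n)) + (f (i + n) - f i) := by
        push_cast; ring_nf
      rw [h1]
      calc |_ + _| ≤ |f ((i + n) + 1) - f (i + n)| + |f (i + n) - f i| := abs_add_le _ _
        _ ≤ D + (n : ℝ) * D := add_le_add (hD _) (ih i)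
        _ = ((n+1 : ℕ) : ℝ) * D := by push_cast; ring
  rcases le_total i j with hle | hle
  · have h2 := hn (j - i).natAbs i
    have h3 : i + ((j - i).natAbs : ℤ) = j := by omega
    rwa [h3] at h2
  · have h2 := hn (j - i).natAbs j
    have h3 : j + ((j - i).natAbs : ℤ) = i := by omega
    rw [h3] at h2
    rwa [abs_sub_comm]

include ha hq hfac hnn hq1 in
private lemma prox (M : ℕ) (hM : ∀ m : ℤ, a m ≠ 0 → m.natAbs ≤ M)
    (f : ℤ → ℝ) (D : ℝ) (hD : ∀ j : ℤ, |f (j+1) - f j| ≤ D)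
    (i i' : ℤ) (hii : (i' - 2*i).natAbs ≤ 1) :
    |subdiv a f i' - f i| ≤ ((M:ℝ) + 1) * D := by
  have hD0 : 0 ≤ D := le_trans (abs_nonneg _) (hD 0)
  have hann : ∀ m : ℤ, 0 ≤ a m := fun m => by rw [hfac]; exact add_nonneg (hnn _) (hnn _)
  have hsa : (Function.support (fun j : ℤ => a (i' - 2*j))).Finite := supp2 ha i'
  have key : subdiv a f i' - f i = ∑ᶠ j : ℤ, a (i' - 2*j) * (f j - f i) := by
    have h1 : (∑ᶠ j : ℤ, a (i' - 2*j)) * f i = ∑ᶠ j : ℤ, a (i' - 2*j) * f i :=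
      finsum_mul _ _
    rw [mask_sum hq hfac hq1 i', one_mul] at h1
    calc subdiv a f i' - f i
        = (∑ᶠ j : ℤ, a (i' - 2*j) * f j) - ∑ᶠ j : ℤ, a (i' - 2*j) * f i := by
          rw [← h1]; rfl
      _ = ∑ᶠ j : ℤ, (a (i' - 2*j) * f j - a (i' - 2*j) * f i) :=
          (finsum_sub_distrib (hsa.subset fun j hj => left_ne_zero_of_mul hj)
            (hsa.subset fun j hj => left_ne_zero_of_mul hj)).symm
      _ = _ := finsum_congr fun j => by ring
  rw [key]
  have step1 : |∑ᶠ j : ℤ, a (i' - 2*j) * (f j - f i)|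
      ≤ ∑ᶠ j : ℤ, a (i' - 2*j) * (((M:ℝ) + 1) * D) := by
    refine abs_finsum_le _ _ (hsa.subset fun j hj => left_ne_zero_of_mul hj) ?_
    intro j
    rw [abs_mul, abs_of_nonneg (hann _)]
    rcases eq_or_ne (a (i' - 2*j)) 0 with h0 | h0
    · rw [h0]; simp
    refine mul_le_mul_of_nonneg_left ?_ (hann _)
    have hsupp := hM _ h0
    have hji : ((j - i).natAbs : ℝ) ≤ (M:ℝ) + 1 := by
      have : (j - i).natAbs ≤ M + 1 := by omega
      exact_mod_cast this
    exact (steps f D hD i j).trans (mul_le_mul_of_nonneg_right hji hD0)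
  refine step1.trans ?_
  rw [← finsum_mul _ _, mask_sum hq hfac hq1 i', one_mul]

end main

section conv
variable {a q : ℤ → ℝ} (ha : (Function.support a).Finite) (hq : (Function.support q).Finite)
  (hfac : ∀ i : ℤ, a i = q i + q (i - 1))
  (hnn : ∀ i : ℤ, 0 ≤ q i) (hq1 : ∑ᶠ i : ℤ, q i = 1)

include ha hq hfac hnn hq1 in
private lemma converges
    (hμ : max (∑ᶠ j : ℤ, q (2 * j)) (∑ᶠ j : ℤ, q (2 * j + 1)) < 1)
    (f0 : ℤ → ℝ) (hbdd : Bdd f0) :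
    ∃ fstar : ℝ → ℝ, ConvergesTo a f0 fstar := by
  set μ := max (∑ᶠ j : ℤ, q (2 * j)) (∑ᶠ j : ℤ, q (2 * j + 1)) with hμdef
  have hμ0 : 0 ≤ μ := le_trans (finsum_nonneg fun j => hnn _) (le_max_left _ _)
  obtain ⟨C, hC⟩ := hbdd
  set D := 2 * C with hDdef
  have hD : ∀ j : ℤ, |f0 (j + 1) - f0 j| ≤ D := by
    intro j
    calc |f0 (j+1) - f0 j| ≤ |f0 (j+1)| + |f0 j| := abs_sub _ _
      _ ≤ C + C := add_le_add (hC _) (hC _)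
      _ = D := by rw [hDdef]; ring
  have hD0 : 0 ≤ D := le_trans (abs_nonneg _) (hD 0)
  set fk : ℕ → ℤ → ℝ := fun k => (subdiv a)^[k] f0 with hfk
  have hfksucc : ∀ k, fk (k + 1) = subdiv a (fk k) := fun k =>
    Function.iterate_succ_apply' _ _ _
  have hDk : ∀ k : ℕ, ∀ j : ℤ, |fk k (j + 1) - fk k j| ≤ μ ^ k * D := by
    intro k
    induction k with
    | zero => simpa [hfk] using hD
    | succ k ih =>
      intro j
      have hco := contract hq hfac hnn (fk k) (μ ^ k * D) ih j
      calc |fk (k+1) (j+1) - fk (k+1) j| = |Δseq (subdiv a (fk k)) j| := by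
            rw [hfksucc]; rfl
        _ ≤ μ * (μ ^ k * D) := hco
        _ = μ ^ (k+1) * D := by ring
  set M : ℕ := ha.toFinset.sup (fun m => m.natAbs) with hMdef
  have hMs : ∀ m : ℤ, a m ≠ 0 → m.natAbs ≤ M := fun m hm =>
    Finset.le_sup (ha.mem_toFinset.mpr hm)
  set hh : ℕ → ℝ → ℝ := fun k x => fk k (round ((2:ℝ) ^ k * x)) with hhdef
  have hinc : ∀ (k : ℕ) (x : ℝ), |hh (k+1) x - hh k x| ≤ ((M:ℝ) + 1) * D * μ ^ k := by
    intro k x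
    set i' := round ((2:ℝ) ^ (k+1) * x) with hi'
    set i := round ((2:ℝ) ^ k * x) with hi
    have hr1 : |(2:ℝ) ^ (k+1) * x - i'| ≤ 1/2 := abs_sub_round _
    have hr2 : |(2:ℝ) ^ k * x - i| ≤ 1/2 := abs_sub_round _
    have hcast : |((i' - 2*i : ℤ) : ℝ)| ≤ 3/2 := by
      push_cast
      have he : ((i':ℝ) - 2*(i:ℝ)) = -((2:ℝ) ^ (k+1) * x - i') + 2*((2:ℝ) ^ k * x - i) := by
        rw [pow_succ]; ring
      rw [he]
      calc |(-((2:ℝ) ^ (k+1) * x - i') + 2*((2:ℝ) ^ k * x - i))|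
          ≤ |(-((2:ℝ) ^ (k+1) * x - i'))| + |2*((2:ℝ) ^ k * x - i)| := abs_add_le _ _
        _ = |(2:ℝ) ^ (k+1) * x - i'| + 2 * |(2:ℝ) ^ k * x - i| := by
            rw [abs_neg, abs_mul]; norm_num
        _ ≤ 1/2 + 2 * (1/2) := by gcongr
        _ = 3/2 := by norm_num
    have hnatAbs : (i' - 2*i).natAbs ≤ 1 := by
      have h3 : ((i' - 2*i).natAbs : ℝ) ≤ 3/2 := by
        rw [Nat.cast_natAbs]; exact_mod_cast hcast
      by_contra hcon
      push_neg at hcon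
      have h4 : (2:ℝ) ≤ ((i' - 2*i).natAbs : ℝ) := by exact_mod_cast hcon
      linarith
    have hpx := prox ha hq hfac hnn hq1 M hMs (fk k) (μ ^ k * D) (hDk k) i i' hnatAbs
    have hstep1 : hh (k+1) x = subdiv a (fk k) i' := by
      show fk (k+1) (round ((2:ℝ) ^ (k+1) * x)) = subdiv a (fk k) i'
      rw [hfksucc]
    have hstep2 : hh k x = fk k i := rfl
    calc |hh (k+1) x - hh k x| = |subdiv a (fk k) i' - fk k i| := by
          rw [hstep1, hstep2]
      _ ≤ ((M:ℝ) + 1) * (μ ^ k * D) := hpx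
      _ = ((M:ℝ) + 1) * D * μ ^ k := by ring
  have hgeo : Summable (fun m : ℕ => ((M:ℝ) + 1) * D * μ ^ m) :=
    (summable_geometric_of_lt_one hμ0 hμ).mul_left _
  have hsum : ∀ x : ℝ, Summable (fun m : ℕ => hh (m+1) x - hh m x) := fun x =>
    Summable.of_norm_bounded hgeo (fun m => by
      rw [Real.norm_eq_abs]; exact hinc m x)
  set fstar : ℝ → ℝ := fun x => hh 0 x + ∑' m : ℕ, (hh (m+1) x - hh m x) with hfstar
  set E := ((M:ℝ) + 1) * D * (1 - μ)⁻¹ with hE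
  have hE0 : 0 ≤ E := mul_nonneg (mul_nonneg (by positivity) hD0)
    (inv_nonneg.mpr (by linarith))
  have htail : ∀ (k : ℕ) (x : ℝ), |hh k x - fstar x| ≤ E * μ ^ k := by
    intro k x
    have h1 : ∑ m ∈ Finset.range k, (hh (m+1) x - hh m x) = hh k x - hh 0 x := by
      exact Finset.sum_range_sub (fun m => hh m x) k
    have h2 := Summable.sum_add_tsum_nat_add (f := fun m : ℕ => hh (m+1) x - hh m x) k (hsum x)
    have hsumk : Summable (fun m : ℕ => hh (m+k+1) x - hh (m+k) x) := by
      exact (summable_nat_add_iff (f := fun m : ℕ => hh (m+1) x - hh m x) k).mpr (hsum x)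
    have h3 : hh k x - fstar x = - ∑' m : ℕ, (hh (m+k+1) x - hh (m+k) x) := by
      have h4 : ∑' m : ℕ, (hh (m+1) x - hh m x)
          = (hh k x - hh 0 x) + ∑' m : ℕ, (hh (m+k+1) x - hh (m+k) x) := by
        rw [← h1, ← h2]
      rw [hfstar]
      simp only []
      rw [h4]
      ring
    rw [h3, abs_neg]
    have hb : ∀ m : ℕ, ‖hh (m+k+1) x - hh (m+k) x‖ ≤ ((M:ℝ) + 1) * D * μ ^ (m+k) := by
      intro m
      rw [Real.norm_eq_abs]
      exact hinc (m+k) x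
    have hgeok : Summable (fun m : ℕ => ((M:ℝ) + 1) * D * μ ^ (m+k)) := by
      exact (summable_nat_add_iff (f := fun m : ℕ => ((M:ℝ) + 1) * D * μ ^ m) k).mpr hgeo
    have hsumknorm : Summable (fun m : ℕ => ‖hh (m+k+1) x - hh (m+k) x‖) := by
      simpa only [Real.norm_eq_abs] using hsumk.abs
    calc |∑' m : ℕ, (hh (m+k+1) x - hh (m+k) x)|
        ≤ ∑' m : ℕ, ‖hh (m+k+1) x - hh (m+k) x‖ := by
          rw [← Real.norm_eq_abs]
          exact norm_tsum_le_tsum_norm hsumknorm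
      _ ≤ ∑' m : ℕ, ((M:ℝ) + 1) * D * μ ^ (m+k) := Summable.tsum_le_tsum hb hsumknorm hgeok
      _ = E * μ ^ k := by
          have he : ∀ m : ℕ, ((M:ℝ) + 1) * D * μ ^ (m+k)
              = (((M:ℝ) + 1) * D * μ ^ k) * μ ^ m := by
            intro m; rw [pow_add]; ring
          rw [tsum_congr he, tsum_mul_left, tsum_geometric_of_lt_one hμ0 hμ, hE]
          ring
  have hcont : Continuous fstar := by
    rw [Metric.continuous_iff]
    intro x ε hε
    have htend : Tendsto (fun k : ℕ => (2*E + 2*D) * μ ^ k) atTop (𝓝 0) := by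
      have := (tendsto_pow_atTop_nhds_zero_of_lt_one hμ0 hμ).const_mul (2*E + 2*D)
      simpa using this
    obtain ⟨k, hk⟩ := (htend.eventually_lt_const hε).exists
    refine ⟨((2:ℝ) ^ k)⁻¹, by positivity, ?_⟩
    intro y hy
    rw [Real.dist_eq] at hy ⊢
    set iy := round ((2:ℝ) ^ k * y) with hiy
    set ix := round ((2:ℝ) ^ k * x) with hix
    have hr1 : |(2:ℝ) ^ k * y - iy| ≤ 1/2 := abs_sub_round _
    have hr2 : |(2:ℝ) ^ k * x - ix| ≤ 1/2 := abs_sub_round _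
    have hxy : |(2:ℝ) ^ k * y - (2:ℝ) ^ k * x| < 1 := by
      rw [← mul_sub, abs_mul, abs_of_nonneg (by positivity : (0:ℝ) ≤ (2:ℝ)^k)]
      calc (2:ℝ) ^ k * |y - x| < (2:ℝ) ^ k * ((2:ℝ) ^ k)⁻¹ := by
            apply mul_lt_mul_of_pos_left hy (by positivity)
        _ = 1 := by field_simp
    have hcast : |((iy - ix : ℤ) : ℝ)| < 2 := by
      push_cast
      have t0 : |(iy:ℝ) - ix| ≤ |(iy:ℝ) - (2:ℝ) ^ k * x| + |(2:ℝ) ^ k * x - (ix:ℝ)| :=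
        abs_sub_le _ _ _
      have t1 : |(iy:ℝ) - (2:ℝ) ^ k * x|
          ≤ |(iy:ℝ) - (2:ℝ) ^ k * y| + |(2:ℝ) ^ k * y - (2:ℝ) ^ k * x| := abs_sub_le _ _ _
      have t2 : |(iy:ℝ) - (2:ℝ) ^ k * y| ≤ 1/2 := by rwa [abs_sub_comm] at hr1
      linarith
    have hna : ((iy - ix).natAbs : ℝ) ≤ 2 := by
      rw [Nat.cast_natAbs]
      have : |((iy - ix : ℤ) : ℝ)| ≤ 2 := le_of_lt hcast
      exact_mod_cast this
    have h2 : |hh k y - hh k x| ≤ 2 * (μ ^ k * D) := by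
      have hst := steps (fk k) (μ ^ k * D) (hDk k) ix iy
      have hst2 : |fk k iy - fk k ix| ≤ 2 * (μ ^ k * D) := by
        refine hst.trans (mul_le_mul_of_nonneg_right hna ?_)
        exact mul_nonneg (pow_nonneg hμ0 k) hD0
      exact hst2
    calc |fstar y - fstar x|
        ≤ |fstar y - hh k y| + |hh k y - hh k x| + |hh k x - fstar x| := by
          have := abs_sub_le (fstar y) (hh k y) (fstar x)
          have := abs_sub_le (hh k y) (hh k x) (fstar x)
          linarith [abs_sub_le (fstar y) (hh k y) (fstar x),
            abs_sub_le (hh k y) (hh k x) (fstar x)]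
      _ ≤ E * μ ^ k + 2 * (μ ^ k * D) + E * μ ^ k := by
          have u1 : |fstar y - hh k y| ≤ E * μ ^ k := by
            rw [abs_sub_comm]; exact htail k y
          exact add_le_add (add_le_add u1 h2) (htail k x)
      _ ≤ (2 * E + 2 * D) * μ ^ k := by ring_nf; linarith
      _ < ε := hk
  refine ⟨fstar, hcont, ?_⟩
  intro N hN
  apply squeeze_zero (g := fun k : ℕ => E * μ ^ k)
  · intro k
    exact Real.iSup_nonneg fun i => abs_nonneg _
  · intro k
    refine Real.iSup_le (fun i => ?_) (mul_nonneg hE0 (pow_nonneg hμ0 k))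
    have hround : round ((2:ℝ) ^ k * ((i.1 : ℝ) / 2 ^ k)) = i.1 := by
      rw [mul_div_cancel₀ (i.1 : ℝ) (by positivity : ((2:ℝ) ^ k) ≠ 0)]
      exact round_intCast _
    have ht := htail k ((i.1 : ℝ) / 2 ^ k)
    have hhe : hh k ((i.1 : ℝ) / 2 ^ k) = (subdiv a)^[k] f0 i.1 := by
      show fk k (round ((2:ℝ) ^ k * ((i.1 : ℝ) / 2 ^ k))) = fk k i.1
      rw [hround]
    rwa [hhe] at ht
  · simpa using (tendsto_pow_atTop_nhds_zero_of_lt_one hμ0 hμ).const_mul E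

include hq hfac hq1 in
private lemma const_one : ∀ k : ℕ, (subdiv a)^[k] (fun _ : ℤ => (1:ℝ)) = fun _ => 1 := by
  intro k
  induction k with
  | zero => rfl
  | succ k ih =>
    rw [Function.iterate_succ_apply', ih]
    funext i
    show ∑ᶠ j : ℤ, a (i - 2*j) * 1 = 1
    simpa using mask_sum hq hfac hq1 i

end conv


/-- If the mask `a` factors as `a(z) = (1+z) q(z)` (i.e. `a_i = q_i + q_{i-1}`)
with `q` finitely supported, non-negative, `q(1) = 1` and `max{S_e, S_o} < 1`, then the scheme
`S_a` is uniformly convergent and `μ = max{S_e, S_o}` is a contractivity factor with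
contractivity number `1`. -/
theorem convergent_of_nonneg_difference_mask (a q : ℤ → ℝ)
    (ha : (Function.support a).Finite) (hq : (Function.support q).Finite)
    (hfac : ∀ i : ℤ, a i = q i + q (i - 1))
    (hnn : ∀ i : ℤ, 0 ≤ q i) (hq1 : ∑ᶠ i : ℤ, q i = 1)
    (hμ : max (∑ᶠ j : ℤ, q (2 * j)) (∑ᶠ j : ℤ, q (2 * j + 1)) < 1) :
    UniformlyConvergent a ∧
      ∀ f : ℤ → ℝ, Bdd f →
        (⨆ i : ℤ, |Δseq (subdiv a f) i|) ≤
          max (∑ᶠ j : ℤ, q (2 * j)) (∑ᶠ j : ℤ, q (2 * j + 1)) * ⨆ i : ℤ, |Δseq f i| := by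
  have hμ0 : (0:ℝ) ≤ max (∑ᶠ j : ℤ, q (2 * j)) (∑ᶠ j : ℤ, q (2 * j + 1)) :=
    le_trans (finsum_nonneg fun j => hnn _) (le_max_left _ _)
  constructor
  · constructor
    · exact fun f0 hb => converges ha hq hfac hnn hq1 hμ f0 hb
    · refine ⟨fun _ => 1, fun _ => 1, ⟨1, fun i => by norm_num⟩, ⟨continuous_const, ?_⟩, ?_⟩
      · intro N hN
        have hz : ∀ k : ℕ, (⨆ i : {i : ℤ // |(i:ℝ)| ≤ N * 2 ^ k},
            |(subdiv a)^[k] (fun _ : ℤ => (1:ℝ)) i.1 - (fun _ : ℝ => (1:ℝ)) ((i.1:ℝ) / 2 ^ k)|)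
            = 0 := by
          intro k
          have h0 : ∀ i : {i : ℤ // |(i:ℝ)| ≤ N * 2 ^ k},
              |(subdiv a)^[k] (fun _ : ℤ => (1:ℝ)) i.1 - (fun _ : ℝ => (1:ℝ)) ((i.1:ℝ) / 2 ^ k)|
              = 0 := by
            intro i
            rw [const_one hq hfac hq1 k]
            simp
          exact le_antisymm (Real.iSup_le (fun i => le_of_eq (h0 i)) le_rfl)
            (Real.iSup_nonneg fun i => abs_nonneg _)
        simpa [hz] using tendsto_const_nhds (x := (0:ℝ)) (f := Filter.atTop (α := ℕ))
      · intro hcon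
        have h1 := congrFun hcon 0
        norm_num at h1
  · intro f hbdd
    obtain ⟨C, hC⟩ := hbdd
    have hbdd2 : BddAbove (Set.range fun i : ℤ => |Δseq f i|) := by
      refine ⟨2*C, ?_⟩
      rintro x ⟨i, rfl⟩
      calc |Δseq f i| ≤ |f (i+1)| + |f i| := abs_sub _ _
        _ ≤ C + C := add_le_add (hC _) (hC _)
        _ = 2*C := by ring
    have hle : ∀ j : ℤ, |f (j+1) - f j| ≤ ⨆ i : ℤ, |Δseq f i| := fun j => le_ciSup hbdd2 j
    have hco := contract hq hfac hnn f _ hle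
    exact Real.iSup_le (fun i => hco i)
      (mul_nonneg hμ0 (Real.iSup_nonneg fun i => abs_nonneg _))
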